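/- Almost sure decay of fill distance: with Y₁,…,Y_n i.i.d. on 𝕋^d with density bounded below by γ > 0 and r_n the fill distance as above, if h_n → 0 satisfies n h_n^{3d/2} / log n → ∞, then r_n² / h_n³ → 0 almost surely as n → ∞. -/

import Mathlib

open MeasureTheory ProbabilityTheory Filter Metric Set ENNReal

lemma circle_approx (m : ℕ) (hm : 0 < m) (y : AddCircle (1 : ℝ)) :
    ∃ k : Fin m, dist y (((k : ℝ) / m : ℝ) : AddCircle (1:ℝ)) ≤ 1 / m := by
  haveI : Fact ((0:ℝ) < 1) := ⟨one_pos⟩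
  obtain ⟨x, rfl⟩ := QuotientAddGroup.mk_surjective y
  set a : ℝ := Int.fract x with ha
  have hxa : ((a : ℝ) : AddCircle (1:ℝ)) = (x : AddCircle (1:ℝ)) := by
    have : ((⌊x⌋ : ℝ) : AddCircle (1:ℝ)) = 0 := by
      have := AddCircle.coe_zsmul (p := (1:ℝ)) (n := ⌊x⌋) (x := (1:ℝ))
      simp only [zsmul_eq_mul, mul_one] at this
      rw [this]
      simp [AddCircle.coe_period]
    have hsub : a = x - (⌊x⌋ : ℝ) := Int.self_sub_floor x ▸ rfl
    rw [hsub, AddCircle.coe_sub, this, sub_zero]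
  have ha0 : 0 ≤ a := Int.fract_nonneg x
  have ha1 : a < 1 := Int.fract_lt_one x
  set k : ℕ := ⌊a * m⌋₊ with hk
  have hklt : k < m := by
    have : a * m < m := by
      have := (mul_lt_mul_of_pos_right ha1 (by exact_mod_cast hm : (0:ℝ) < m))
      simpa using this
    exact Nat.floor_lt (by positivity) |>.mpr (by exact_mod_cast this)
  refine ⟨⟨k, hklt⟩, ?_⟩
  have hmR : (0:ℝ) < m := by exact_mod_cast hm
  have h1 : (k : ℝ) ≤ a * m := Nat.floor_le (by positivity)
  have h2 : a * m < k + 1 := Nat.lt_floor_add_one _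
  have habs : |a - (k : ℝ) / m| ≤ 1 / m := by
    rw [abs_le]
    constructor
    · have : (k:ℝ)/m ≤ a := by rw [div_le_iff₀ hmR]; linarith
      linarith [one_div_pos.mpr hmR]
    · have : a - (k:ℝ)/m ≤ 1/m := by
        rw [sub_le_iff_le_add, ← add_div, le_div_iff₀ hmR]; linarith
      exact this
  calc dist ((x : AddCircle (1:ℝ))) (((k : ℝ)/m : ℝ) : AddCircle (1:ℝ))
      = ‖((a - (k:ℝ)/m : ℝ) : AddCircle (1:ℝ))‖ := by
        rw [← hxa, dist_eq_norm, AddCircle.coe_sub]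
    _ ≤ |a - (k:ℝ)/m| := by
        simpa using QuotientAddGroup.norm_mk_le_norm (S := AddSubgroup.zmultiples (1:ℝ)) (m := a - (k:ℝ)/m)
    _ ≤ 1 / m := habs

lemma grid_cover (d : ℕ) (m : ℕ) (hm : 0 < m) :
    ∃ G : Finset (Fin d → AddCircle (1:ℝ)), G.card ≤ m ^ d ∧
      ∀ x : Fin d → AddCircle (1:ℝ), ∃ g ∈ G, dist x g ≤ 1 / m := by
  classical
  refine ⟨Finset.image
    (fun k : Fin d → Fin m => fun i => (((k i : ℝ) / m : ℝ) : AddCircle (1:ℝ)))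
    Finset.univ, ?_, ?_⟩
  · calc _ ≤ (Finset.univ : Finset (Fin d → Fin m)).card := Finset.card_image_le
      _ = m ^ d := by simp
  · intro x
    choose k hk using fun i => circle_approx m hm (x i)
    refine ⟨_, Finset.mem_image_of_mem _ (Finset.mem_univ k), ?_⟩
    rw [dist_pi_le_iff (by positivity)]
    exact fun i => hk i

lemma ball_vol_lb (d : ℕ) {ρ : ℝ} (hρ : 0 < ρ) (hρ2 : ρ ≤ 1/2)
    (c : Fin d → AddCircle (1:ℝ)) :
    ENNReal.ofReal (ρ ^ d) ≤ volume (Metric.ball c ρ) := by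
  haveI : Fact ((0:ℝ) < 1) := ⟨one_pos⟩
  rw [ball_pi _ hρ]
  rw [volume_pi_pi]
  calc ENNReal.ofReal (ρ ^ d) = ∏ _i : Fin d, ENNReal.ofReal ρ := by
        rw [Finset.prod_const]
        rw [← ENNReal.ofReal_pow hρ.le]
        simp
    _ ≤ ∏ i : Fin d, volume (Metric.ball (c i) ρ) := by
        refine Finset.prod_le_prod' fun i _ => ?_
        calc ENNReal.ofReal ρ = volume (Metric.closedBall (c i) (ρ/2)) := by
              rw [AddCircle.volume_closedBall]
              congr 1
              rw [min_eq_right]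
              · ring
              · linarith
          _ ≤ volume (Metric.ball (c i) ρ) :=
              measure_mono (Metric.closedBall_subset_ball (by linarith))

lemma conc_bound (d : ℕ)
    {Ω : Type*} [MeasurableSpace Ω] (P : Measure Ω) [IsProbabilityMeasure P]
    (Y : ℕ → Ω → (Fin d → AddCircle (1 : ℝ)))
    (hmeas : ∀ i, Measurable (Y i))
    (hindep : iIndepFun Y P)
    (μ : Measure (Fin d → AddCircle (1 : ℝ)))
    (hid : ∀ i, P.map (Y i) = μ)
    (γ : NNReal) (hlb : γ • (volume : Measure (Fin d → AddCircle (1 : ℝ))) ≤ μ)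
    (t : ℝ) (ht : 0 < t) (ht2 : t / 4 ≤ 1 / 2)
    (m : ℕ) (hm : 0 < m) (hmt : 1 / (m : ℝ) ≤ t / 4) (n : ℕ) :
    P {ω | t ≤ ⨆ x : Fin d → AddCircle (1:ℝ),
        Metric.infDist x ((fun i => Y i ω) '' Set.Iio n)}
      ≤ (m : ℝ≥0∞) ^ d *
        ENNReal.ofReal (Real.exp (-((n : ℝ) * ((γ : ℝ) * (t / 4) ^ d)))) := by
  classical
  haveI : IsProbabilityMeasure μ := by
    rw [← hid 0]; exact Measure.isProbabilityMeasure_map (hmeas 0).aemeasurable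
  obtain ⟨G, hcard, hcover⟩ := grid_cover d m hm
  set ρ : ℝ := t / 4 with hρdef
  have hρ : 0 < ρ := by positivity
  -- Step 1: inclusion
  have hincl : {ω | t ≤ ⨆ x : Fin d → AddCircle (1:ℝ),
        Metric.infDist x ((fun i => Y i ω) '' Set.Iio n)}
      ⊆ ⋃ g ∈ G, ⋂ i ∈ Finset.range n, Y i ⁻¹' (Metric.ball g ρ)ᶜ := by
    intro ω hω
    simp only [Set.mem_setOf_eq] at hω
    set S := (fun i => Y i ω) '' Set.Iio n with hS
    have hx : ∃ x : Fin d → AddCircle (1:ℝ), 3 * t / 4 < Metric.infDist x S := by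
      by_contra hcon
      push_neg at hcon
      have : (⨆ x : Fin d → AddCircle (1:ℝ), Metric.infDist x S) ≤ 3 * t / 4 :=
        ciSup_le hcon
      linarith
    obtain ⟨x, hx⟩ := hx
    obtain ⟨g, hgG, hgx⟩ := hcover x
    have hginf : t / 2 ≤ Metric.infDist g S := by
      have h1 : Metric.infDist x S ≤ Metric.infDist g S + dist x g :=
        Metric.infDist_le_infDist_add_dist
      have : dist x g ≤ t / 4 := hgx.trans hmt
      linarith
    refine Set.mem_iUnion₂.mpr ⟨g, hgG, Set.mem_iInter₂.mpr fun i hi => ?_⟩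
    simp only [Set.mem_preimage, Set.mem_compl_iff, Metric.mem_ball, not_lt]
    have hmem : Y i ω ∈ S := ⟨i, Finset.mem_range.mp hi, rfl⟩
    have := Metric.infDist_le_dist_of_mem (x := g) hmem
    rw [dist_comm]
    linarith
  -- Step 2: per-grid-point bound
  have hball : ∀ g : Fin d → AddCircle (1:ℝ),
      P (⋂ i ∈ Finset.range n, Y i ⁻¹' (Metric.ball g ρ)ᶜ)
        ≤ ENNReal.ofReal (Real.exp (-((n : ℝ) * ((γ : ℝ) * ρ ^ d)))) := by
    intro g
    have hCmeas : MeasurableSet (Metric.ball g ρ)ᶜ := Metric.isOpen_ball.measurableSet.compl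
    have hprod : P (⋂ i ∈ Finset.range n, Y i ⁻¹' (Metric.ball g ρ)ᶜ)
        = (μ (Metric.ball g ρ)ᶜ) ^ n := by
      rw [hindep.measure_inter_preimage_eq_mul (Finset.range n)
        (sets := fun _ => (Metric.ball g ρ)ᶜ) (fun i _ => hCmeas)]
      have : ∀ i, P (Y i ⁻¹' (Metric.ball g ρ)ᶜ) = μ (Metric.ball g ρ)ᶜ := fun i => by
        rw [← hid i, Measure.map_apply (hmeas i) hCmeas]
      rw [Finset.prod_congr rfl fun i _ => this i, Finset.prod_const, Finset.card_range]
    rw [hprod]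
    have hq : ENNReal.ofReal ((γ : ℝ) * ρ ^ d) ≤ μ (Metric.ball g ρ) := by
      calc ENNReal.ofReal ((γ : ℝ) * ρ ^ d)
          = (γ : ℝ≥0∞) * ENNReal.ofReal (ρ ^ d) := by
            rw [ENNReal.ofReal_mul (by positivity)]
            congr 1
            simp [ENNReal.ofReal_coe_nnreal]
        _ ≤ (γ : ℝ≥0∞) * volume (Metric.ball g ρ) := by
            gcongr
            exact ball_vol_lb d hρ ht2 g
        _ ≤ μ (Metric.ball g ρ) := by
            have := hlb (Metric.ball g ρ)
            simpa [Measure.smul_apply, smul_eq_mul] using this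
    have hcompl : μ (Metric.ball g ρ)ᶜ ≤ ENNReal.ofReal (Real.exp (-((γ : ℝ) * ρ ^ d))) := by
      rw [measure_compl Metric.isOpen_ball.measurableSet (measure_ne_top μ _)]
      calc μ Set.univ - μ (Metric.ball g ρ)
          ≤ 1 - ENNReal.ofReal ((γ : ℝ) * ρ ^ d) := by
            rw [measure_univ]
            exact tsub_le_tsub_left hq 1
        _ = ENNReal.ofReal (1 - (γ : ℝ) * ρ ^ d) := by
            rw [← ENNReal.ofReal_one, ← ENNReal.ofReal_sub _ (by positivity)]
        _ ≤ ENNReal.ofReal (Real.exp (-((γ : ℝ) * ρ ^ d))) := by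
            apply ENNReal.ofReal_le_ofReal
            linarith [Real.add_one_le_exp (-((γ : ℝ) * ρ ^ d))]
    calc (μ (Metric.ball g ρ)ᶜ) ^ n
        ≤ (ENNReal.ofReal (Real.exp (-((γ : ℝ) * ρ ^ d)))) ^ n := by
          exact pow_le_pow_left' hcompl n
      _ = ENNReal.ofReal (Real.exp (-((γ : ℝ) * ρ ^ d)) ^ n) := by
          rw [ENNReal.ofReal_pow (Real.exp_nonneg _)]
      _ = ENNReal.ofReal (Real.exp (-((n : ℝ) * ((γ : ℝ) * ρ ^ d)))) := by
          rw [← Real.exp_nat_mul]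
          ring_nf
  -- Step 3: combine
  calc P {ω | t ≤ ⨆ x : Fin d → AddCircle (1:ℝ),
        Metric.infDist x ((fun i => Y i ω) '' Set.Iio n)}
      ≤ P (⋃ g ∈ G, ⋂ i ∈ Finset.range n, Y i ⁻¹' (Metric.ball g ρ)ᶜ) :=
        measure_mono hincl
    _ ≤ ∑ g ∈ G, P (⋂ i ∈ Finset.range n, Y i ⁻¹' (Metric.ball g ρ)ᶜ) :=
        measure_biUnion_finset_le G _
    _ ≤ ∑ _g ∈ G, ENNReal.ofReal (Real.exp (-((n : ℝ) * ((γ : ℝ) * ρ ^ d)))) :=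
        Finset.sum_le_sum fun g _ => hball g
    _ = (G.card : ℝ≥0∞) * ENNReal.ofReal (Real.exp (-((n : ℝ) * ((γ : ℝ) * ρ ^ d)))) := by
        rw [Finset.sum_const, nsmul_eq_mul]
    _ ≤ (m : ℝ≥0∞) ^ d * ENNReal.ofReal (Real.exp (-((n : ℝ) * ((γ : ℝ) * ρ ^ d)))) := by
        gcongr
        exact_mod_cast hcard

lemma main_aux (d : ℕ) (hd : 0 < d)
    {Ω : Type*} [MeasurableSpace Ω] (P : Measure Ω) [IsProbabilityMeasure P]
    (Y : ℕ → Ω → (Fin d → AddCircle (1 : ℝ)))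
    (hmeas : ∀ i, Measurable (Y i))
    (hindep : iIndepFun Y P)
    (μ : Measure (Fin d → AddCircle (1 : ℝ)))
    (hid : ∀ i, P.map (Y i) = μ)
    (γ : NNReal) (hγ : 0 < γ) (hlb : γ • (volume : Measure (Fin d → AddCircle (1 : ℝ))) ≤ μ)
    (h : ℕ → ℝ) (hpos : ∀ n, 0 < h n)
    (hto0 : Tendsto h atTop (nhds 0))
    (hrate : Tendsto (fun n : ℕ => (n : ℝ) * (h n) ^ ((3 * (d : ℝ)) / 2) / Real.log n)
      atTop atTop)
    (δ : ℝ) (hδ : 0 < δ) :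
    ∀ᵐ ω ∂P, ∀ᶠ n in atTop,
      (⨆ x : Fin d → AddCircle (1 : ℝ),
        Metric.infDist x ((fun i => Y i ω) '' Set.Iio n)) ^ 2 / (h n) ^ 3 < δ := by
  classical
  set t : ℕ → ℝ := fun n => Real.sqrt (δ * h n ^ 3) with ht_def
  have ht_pos : ∀ n, 0 < t n :=
    fun n => Real.sqrt_pos.mpr (mul_pos hδ (pow_pos (hpos n) 3))
  set A : ℕ → ℝ := fun n => h n ^ ((3 * (d : ℝ)) / 2) with hA_def
  have hA_pos : ∀ n, 0 < A n := fun n => Real.rpow_pos_of_pos (hpos n) _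
  set B : ℝ := δ ^ ((d : ℝ) / 2) with hB_def
  have hB_pos : 0 < B := Real.rpow_pos_of_pos hδ _
  -- key identity : t n ^ d = B * A n
  have htd : ∀ n, t n ^ d = B * A n := by
    intro n
    have hh : (0 : ℝ) ≤ h n := (hpos n).le
    have h3 : (0 : ℝ) ≤ h n ^ 3 := pow_nonneg hh 3
    have hδh : (0 : ℝ) ≤ δ * h n ^ 3 := mul_nonneg hδ.le h3
    have e1 : t n = (δ * h n ^ 3) ^ (1/2 : ℝ) := Real.sqrt_eq_rpow _
    calc t n ^ d = (t n) ^ (d : ℝ) := (Real.rpow_natCast _ d).symm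
      _ = ((δ * h n ^ 3) ^ (1/2 : ℝ)) ^ (d : ℝ) := by rw [e1]
      _ = (δ * h n ^ 3) ^ ((1/2 : ℝ) * d) := (Real.rpow_mul hδh _ _).symm
      _ = δ ^ ((d : ℝ)/2) * (h n ^ 3) ^ ((d : ℝ)/2) := by
          rw [show (1/2 : ℝ) * d = (d : ℝ)/2 by ring, Real.mul_rpow hδ.le h3]
      _ = B * A n := by
          congr 1
          rw [← Real.rpow_natCast (h n) 3, ← Real.rpow_mul hh]
          norm_num
          ring_nf
          show _ = h n ^ ((3 * (d : ℝ)) / 2)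
          ring_nf
  -- continued
  have ht0 : Tendsto t atTop (nhds 0) := by
    have h1 : Tendsto (fun n => δ * h n ^ 3) atTop (nhds (δ * 0 ^ 3)) :=
      tendsto_const_nhds.mul (hto0.pow 3)
    rw [show δ * (0:ℝ) ^ 3 = 0 by ring] at h1
    have h2 := (Real.continuous_sqrt.tendsto 0).comp h1
    simpa [Function.comp_def, Real.sqrt_zero, ht_def] using h2
  set c : ℝ := (γ : ℝ) * B / 4 ^ d with hc_def
  have hγR : (0:ℝ) < γ := hγ
  have hc_pos : 0 < c := by positivity
  set m : ℕ → ℕ := fun n => ⌈(4 : ℝ) / t n⌉₊ with hm_def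
  have hm_pos : ∀ n, 0 < m n :=
    fun n => Nat.ceil_pos.mpr (div_pos four_pos (ht_pos n))
  have hmt : ∀ n, 1 / (m n : ℝ) ≤ t n / 4 := by
    intro n
    have h1 : (4:ℝ) / t n ≤ m n := Nat.le_ceil _
    have h2 : (0:ℝ) < 4 / t n := div_pos four_pos (ht_pos n)
    have := one_div_le_one_div_of_le h2 h1
    rwa [one_div_div] at this
  have hlog : ∀ᶠ n : ℕ in atTop, 1 ≤ Real.log n := by
    filter_upwards [eventually_ge_atTop 3] with n hn
    have h3 : (3:ℝ) ≤ n := by exact_mod_cast hn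
    have h13 : (1:ℝ) ≤ Real.log 3 := by
      rw [Real.le_log_iff_exp_le (by norm_num)]
      exact Real.exp_one_lt_d9.le.trans (by norm_num)
    exact h13.trans (Real.log_le_log (by norm_num) h3)
  have hev2 := hrate.eventually_ge_atTop (3 / c)
  have hev3 := hrate.eventually_ge_atTop 1
  have hev1 : ∀ᶠ n in atTop, t n ≤ 1 :=
    ht0.eventually (eventually_le_nhds one_pos)
  obtain ⟨N, hN⟩ := eventually_atTop.mp
    (hlog.and (hev2.and (hev3.and (hev1.and (eventually_ge_atTop 1)))))
  -- consequences for n ≥ N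
  have hc2 : ∀ n, N ≤ n → 3 * Real.log n ≤ (n : ℝ) * ((γ : ℝ) * (t n / 4) ^ d) := by
    intro n hn
    obtain ⟨l1, l2, _, _, _⟩ := hN n hn
    have hlogpos : (0:ℝ) < Real.log n := lt_of_lt_of_le one_pos l1
    have key : (3 / c) * Real.log n ≤ (n : ℝ) * A n := (le_div_iff₀ hlogpos).mp l2
    have hid2 : (n : ℝ) * ((γ : ℝ) * (t n / 4) ^ d) = c * ((n : ℝ) * A n) := by
      rw [div_pow, htd n, hc_def]; ring
    rw [hid2]
    calc 3 * Real.log n = c * ((3 / c) * Real.log n) := by field_simp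
      _ ≤ c * ((n : ℝ) * A n) := by
          exact mul_le_mul_of_nonneg_left key hc_pos.le
  have hc3 : ∀ n, N ≤ n → ((m n : ℝ)) ^ d ≤ (5 ^ d / B) * n := by
    intro n hn
    obtain ⟨l1, _, l3, l4, l5⟩ := hN n hn
    have hlogpos : (0:ℝ) < Real.log n := lt_of_lt_of_le one_pos l1
    have hnpos : (0:ℝ) < n := lt_of_lt_of_le one_pos (by exact_mod_cast l5)
    have hnA : 1 ≤ (n : ℝ) * A n := by
      have := (le_div_iff₀ hlogpos).mp l3
      nlinarith
    have hAinv : 1 / A n ≤ (n : ℝ) := by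
      rw [div_le_iff₀ (hA_pos n)]
      nlinarith [hA_pos n]
    have hminv : (m n : ℝ) ≤ 5 / t n := by
      have e1 : (m n : ℝ) < 4 / t n + 1 :=
        Nat.ceil_lt_add_one (div_pos four_pos (ht_pos n)).le
      have e2 : (1:ℝ) ≤ 1 / t n := one_le_one_div (ht_pos n) l4
      have : 4 / t n + 1 ≤ 5 / t n := by
        rw [show (5:ℝ) / t n = 4 / t n + 1 / t n by ring]
        linarith
      linarith
    calc ((m n : ℝ)) ^ d ≤ (5 / t n) ^ d := by
          exact pow_le_pow_left₀ (Nat.cast_nonneg _) hminv d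
      _ = 5 ^ d / (B * A n) := by rw [div_pow, htd n]
      _ = (5 ^ d / B) * (1 / A n) := by
          field_simp
      _ ≤ (5 ^ d / B) * n := by
          exact mul_le_mul_of_nonneg_left hAinv (by positivity)
  -- the bad sets
  set s : ℕ → Set Ω := fun n =>
    if N ≤ n then {ω | t n ≤ ⨆ x : Fin d → AddCircle (1:ℝ),
      Metric.infDist x ((fun i => Y i ω) '' Set.Iio n)} else ∅ with hs_def
  set f : ℕ → ℝ := fun n => (5 ^ d / B) * ((n:ℝ) ^ (-2 : ℝ)) with hf_def
  have hf_nonneg : ∀ n, 0 ≤ f n := by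
    intro n
    apply mul_nonneg (by positivity)
    exact Real.rpow_nonneg (Nat.cast_nonneg n) _
  have hf_sum : Summable f :=
    (Real.summable_nat_rpow.mpr (by norm_num : (-2:ℝ) < -1)).mul_left _
  set g : ℕ → ℝ := Set.indicator {k : ℕ | N ≤ k} f with hg_def
  have hg_nonneg : ∀ n, 0 ≤ g n := fun n => Set.indicator_nonneg (fun k _ => hf_nonneg k) n
  have hg_sum : Summable g := hf_sum.indicator _
  -- the key measure bound
  have hPbound : ∀ n, P (s n) ≤ ENNReal.ofReal (g n) := by
    intro n
    by_cases hn : N ≤ n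
    · obtain ⟨l1, _, _, l4, l5⟩ := hN n hn
      have hnpos : (0:ℝ) < n := lt_of_lt_of_le one_pos (by exact_mod_cast l5)
      have hgn : g n = f n := Set.indicator_of_mem hn f
      have hbd := conc_bound d P Y hmeas hindep μ hid γ hlb (t n) (ht_pos n)
        (by linarith) (m n) (hm_pos n) (hmt n) n
      rw [hs_def]
      simp only [if_pos hn]
      refine hbd.trans ?_
      rw [hgn]
      have e0 : ((m n : ℝ≥0∞)) ^ d = ENNReal.ofReal ((m n : ℝ) ^ d) := by
        rw [ENNReal.ofReal_pow (Nat.cast_nonneg _), ENNReal.ofReal_natCast]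
      rw [e0, ← ENNReal.ofReal_mul (by positivity)]
      apply ENNReal.ofReal_le_ofReal
      have e1 : Real.exp (-((n : ℝ) * ((γ : ℝ) * (t n / 4) ^ d)))
          ≤ Real.exp (-(3 * Real.log n)) := by
        apply Real.exp_le_exp.mpr
        have := hc2 n hn
        linarith
      have e2 : Real.exp (-(3 * Real.log n)) = (n : ℝ) ^ (-3 : ℝ) := by
        rw [Real.rpow_def_of_pos hnpos]
        ring_nf
      calc (m n : ℝ) ^ d * Real.exp (-((n : ℝ) * ((γ : ℝ) * (t n / 4) ^ d)))
          ≤ ((5 ^ d / B) * n) * ((n : ℝ) ^ (-3 : ℝ)) := by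
            rw [← e2]
            apply mul_le_mul (hc3 n hn) e1 (Real.exp_nonneg _)
            positivity
        _ = f n := by
            rw [hf_def]
            have : (n:ℝ) * (n:ℝ) ^ (-3:ℝ) = (n:ℝ) ^ (-2:ℝ) := by
              nth_rewrite 1 [← Real.rpow_one (n:ℝ)]
              rw [← Real.rpow_add hnpos]
              norm_num
            rw [mul_assoc, this]
    · rw [hs_def]
      simp only [if_neg hn]
      simp [Set.indicator_of_notMem hn]
  have htsum : ∑' n, P (s n) ≠ ⊤ := by
    have h1 : ∑' n, P (s n) ≤ ∑' n, ENNReal.ofReal (g n) :=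
      ENNReal.tsum_le_tsum hPbound
    have h2 : ∑' n, ENNReal.ofReal (g n) = ENNReal.ofReal (∑' n, g n) :=
      (ENNReal.ofReal_tsum_of_nonneg hg_nonneg hg_sum).symm
    exact ne_top_of_le_ne_top (h2 ▸ ENNReal.ofReal_ne_top) h1
  have hlimsup := MeasureTheory.measure_limsup_atTop_eq_zero (μ := P) htsum
  have hae : ∀ᵐ ω ∂P, ω ∉ limsup s atTop := by
    rw [ae_iff]
    simpa [not_not] using hlimsup
  filter_upwards [hae] with ω hω
  rw [mem_limsup_iff_frequently_mem, not_frequently] at hω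
  filter_upwards [hω, eventually_ge_atTop N] with n h1 h2
  set r := ⨆ x : Fin d → AddCircle (1:ℝ),
    Metric.infDist x ((fun i => Y i ω) '' Set.Iio n) with hr_def
  have hr0 : 0 ≤ r := Real.iSup_nonneg fun x => Metric.infDist_nonneg
  have hrt : r < t n := by
    rw [hs_def] at h1
    simp only [if_pos h2, Set.mem_setOf_eq] at h1
    exact not_le.mp h1
  have hr2 : r ^ 2 < δ * h n ^ 3 := (Real.lt_sqrt hr0).mp hrt
  rw [div_lt_iff₀ (pow_pos (hpos n) 3)]
  linarith

/-- Almost sure decay of the fill distance: if `Y₁, Y₂, …` are i.i.d. on the `d`-dimensional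
torus with law `μ` whose density is bounded below by `γ > 0`, `r_n` is the fill distance of
the first `n` sample points, and `h_n → 0` with `n h_n^{3d/2} / log n → ∞`, then
`r_n² / h_n³ → 0` almost surely. -/
theorem fill_distance_as_decay (d : ℕ) (hd : 0 < d)
    {Ω : Type*} [MeasurableSpace Ω] (P : Measure Ω) [IsProbabilityMeasure P]
    (Y : ℕ → Ω → (Fin d → AddCircle (1 : ℝ)))
    (hmeas : ∀ i, Measurable (Y i))
    (hindep : iIndepFun Y P)
    (μ : Measure (Fin d → AddCircle (1 : ℝ)))
    (hid : ∀ i, P.map (Y i) = μ)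
    (γ : NNReal) (hγ : 0 < γ) (hlb : γ • (volume : Measure (Fin d → AddCircle (1 : ℝ))) ≤ μ)
    (h : ℕ → ℝ) (hpos : ∀ n, 0 < h n)
    (hto0 : Tendsto h atTop (nhds 0))
    (hrate : Tendsto (fun n : ℕ => (n : ℝ) * (h n) ^ ((3 * (d : ℝ)) / 2) / Real.log n)
      atTop atTop) :
    ∀ᵐ ω ∂P, Tendsto
      (fun n : ℕ =>
        (⨆ x : Fin d → AddCircle (1 : ℝ),
          Metric.infDist x ((fun i => Y i ω) '' Set.Iio n)) ^ 2 / (h n) ^ 3)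
      atTop (nhds 0) := by
  have key : ∀ k : ℕ, ∀ᵐ ω ∂P, ∀ᶠ n in atTop,
      (⨆ x : Fin d → AddCircle (1 : ℝ),
        Metric.infDist x ((fun i => Y i ω) '' Set.Iio n)) ^ 2 / (h n) ^ 3
        < 1 / ((k : ℝ) + 1) :=
    fun k => main_aux d hd P Y hmeas hindep μ hid γ hγ hlb h hpos hto0 hrate
      (1 / ((k : ℝ) + 1)) (by positivity)
  filter_upwards [ae_all_iff.mpr key] with ω hω
  rw [Metric.tendsto_atTop]
  intro ε hε
  obtain ⟨k, hk⟩ := exists_nat_one_div_lt hε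
  obtain ⟨N, hNn⟩ := eventually_atTop.mp (hω k)
  refine ⟨N, fun n hn => ?_⟩
  have h1 := hNn n hn
  have h0 : 0 ≤ (⨆ x : Fin d → AddCircle (1 : ℝ),
      Metric.infDist x ((fun i => Y i ω) '' Set.Iio n)) ^ 2 / (h n) ^ 3 := by
    apply div_nonneg _ (pow_pos (hpos n) 3).le
    exact sq_nonneg _
  rw [Real.dist_eq, sub_zero, abs_of_nonneg h0]
  calc _ < 1 / ((k : ℝ) + 1) := h1
    _ < ε := hk
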